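/- Let τ = (1+√5)/2, ω = e^{iπ/5}, R = diag(e^{−4πi/5}, e^{3πi/5}), F = [[1/τ, 1/√τ],[1/√τ, −1/τ]], and S = FRF. Define M₀ = S and inductively M_j = M_{j−1}·R^{−1}·M_{j−1}†·R³·M_{j−1}·R^{−3}·M_{j−1}†·R·M_{j−1}. Then for all j ≥ 0, |⟨0| M_j |0⟩| = (1/τ)^{5^j}. -/

import Mathlib

open Matrix Complex

noncomputable def fibR : Matrix (Fin 2) (Fin 2) ℂ :=
  !![Complex.exp (-4 * Real.pi * Complex.I / 5), 0; 0, Complex.exp (3 * Real.pi * Complex.I / 5)]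

noncomputable def fibF : Matrix (Fin 2) (Fin 2) ℂ :=
  !![(1 / ((1 + Real.sqrt 5) / 2) : ℝ), (1 / Real.sqrt ((1 + Real.sqrt 5) / 2) : ℝ);
     (1 / Real.sqrt ((1 + Real.sqrt 5) / 2) : ℝ), -(1 / ((1 + Real.sqrt 5) / 2) : ℝ)]

noncomputable def fibw : ℂ := Complex.exp (Real.pi  *  Complex.I / 5)

lemma fibw_pow_five : fibw ^  5 = -1 := by
  rw [fibw, ← Complex.exp_nat_mul]
  rw [show ((5 : ℕ) : ℂ)  *  (Real.pi  *  Complex.I / 5) = Real.pi  *  Complex.I by push_cast; ring]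
  exact Complex.exp_pi_mul_I

lemma fibw_pow_ten : fibw ^  10 = 1 := by
  rw [show (10 : ℕ) = 2  *  5 by norm_num, pow_mul', fibw_pow_five]; norm_num

lemma fibw_ne_neg_one : fibw ≠ -1 := by
  intro h
  have him : fibw.im = Real.sin (Real.pi / 5) := by
    rw [fibw, show (Real.pi  *  Complex.I / 5 : ℂ) = ((Real.pi / 5 : ℝ) : ℂ)  *  Complex.I by
      push_cast; ring]
    exact Complex.exp_ofReal_mul_I_im _
  have hpos : 0 < Real.sin (Real.pi / 5) :=
    Real.sin_pos_of_pos_of_lt_pi (by positivity) (by linarith [Real.pi_pos])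
  have him0 : fibw.im = 0 := by rw [h]; simp
  rw [him] at him0
  linarith

lemma fibw_cyc : fibw ^  4 - fibw ^  3 + fibw ^  2 - fibw + 1 = 0 := by
  have h5 : (fibw + 1)  *  (fibw ^  4 - fibw ^  3 + fibw ^  2 - fibw + 1) = 0 := by
    linear_combination fibw_pow_five
  rcases mul_eq_zero.mp h5 with h | h
  · exact (fibw_ne_neg_one (eq_neg_of_add_eq_zero_left h)).elim
  · exact h

lemma fibw_conj : (starRingEnd ℂ) fibw = fibw ^  9 := by
  have hinv : (starRingEnd ℂ) fibw  *  fibw = 1 := by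
    rw [fibw, ← Complex.exp_conj, ← Complex.exp_add]
    rw [show (starRingEnd ℂ) (Real.pi  *  Complex.I / 5) + Real.pi  *  Complex.I / 5 = 0 by
      simp [map_div₀, Complex.conj_I, Complex.conj_ofReal, map_ofNat]; ring]
    exact Complex.exp_zero
  linear_combination fibw ^  9  *  hinv - (starRingEnd ℂ) fibw  *  fibw_pow_ten

lemma fibw_mul_conj : fibw  *  (starRingEnd ℂ) fibw = 1 := by
  rw [fibw_conj]; linear_combination fibw_pow_ten

lemma fibw_tau : fibw + fibw ^  9 = (((1 + Real.sqrt 5) / 2 : ℝ) : ℂ) := by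
  rw [← fibw_conj, Complex.add_conj]
  have hre : fibw.re = Real.cos (Real.pi / 5) := by
    rw [fibw, show (Real.pi  *  Complex.I / 5 : ℂ) = ((Real.pi / 5 : ℝ) : ℂ)  *  Complex.I by
      push_cast; ring]
    exact Complex.exp_ofReal_mul_I_re _
  rw [hre, Real.cos_pi_div_five]
  push_cast; ring

lemma fibR_eq : fibR = !![fibw ^  6, 0; 0, fibw ^  3] := by
  have h1 : Complex.exp (-4  *  Real.pi  *  Complex.I / 5) = fibw ^  6 := by
    rw [fibw, ← Complex.exp_nat_mul,
      show (-4  *  (Real.pi : ℂ)  *  Complex.I / 5) = ((6 : ℕ) : ℂ)  *  (Real.pi  *  Complex.I / 5)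
        - 2  *  Real.pi  *  Complex.I by push_cast; ring,
      Complex.exp_sub, Complex.exp_two_pi_mul_I, div_one]
  have h2 : Complex.exp (3  *  Real.pi  *  Complex.I / 5) = fibw ^  3 := by
    rw [fibw, ← Complex.exp_nat_mul]
    congr 1
    push_cast; ring
  rw [fibR, h1, h2]

lemma fibR_inv_eq : fibR⁻¹ = !![fibw ^  4, 0; 0, fibw ^  7] := by
  apply Matrix.inv_eq_right_inv
  rw [fibR_eq]
  ext i j
  fin_cases i <;> fin_cases j <;>
    simp [Matrix.mul_apply, Fin.sum_univ_two, Matrix.one_apply] <;>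
    linear_combination fibw_pow_ten

lemma fibR_pow3 : fibR ^  3 = !![fibw ^  8, 0; 0, fibw ^  9] := by
  rw [fibR_eq, pow_succ, pow_succ, pow_one]
  ext i j
  fin_cases i <;> fin_cases j <;>
    simp [Matrix.mul_apply, Fin.sum_univ_two] <;>
    (first | ring1 | linear_combination fibw ^ 8 * fibw_pow_ten | linear_combination fibw ^ 9 * fibw_pow_ten)

lemma fibR_inv_pow3 : (fibR⁻¹) ^  3 = !![fibw ^  2, 0; 0, fibw] := by
  rw [fibR_inv_eq, pow_succ, pow_succ, pow_one]
  ext i j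
  fin_cases i <;> fin_cases j <;>
    simp [Matrix.mul_apply, Fin.sum_univ_two] <;>
    (first | ring1 | linear_combination fibw ^ 2 * fibw_pow_ten | linear_combination fibw * (fibw ^ 10 + 1) * fibw_pow_ten)

lemma mulU {A B : Matrix (Fin 2) (Fin 2) ℂ} (hA : A  *  Aᴴ = 1) (hB : B  *  Bᴴ = 1) :
    (A  *  B)  *  (A  *  B)ᴴ = 1 := by
  rw [Matrix.conjTranspose_mul, Matrix.mul_assoc, ← Matrix.mul_assoc B, hB, Matrix.one_mul, hA]

lemma diagU {x y : ℂ} (hx : x  *  (starRingEnd ℂ) x = 1) (hy : y  *  (starRingEnd ℂ) y = 1) :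
    (!![x, 0; 0, y] : Matrix (Fin 2) (Fin 2) ℂ)  *  (!![x, 0; 0, y])ᴴ = 1 := by
  ext i j
  fin_cases i <;> fin_cases j <;>
    simp [Matrix.mul_apply, Fin.sum_univ_two, Matrix.conjTranspose_apply, Matrix.one_apply, hx, hy]

lemma wkU (k : ℕ) : fibw ^  k  *  (starRingEnd ℂ) (fibw ^  k) = 1 := by
  rw [map_pow, ← mul_pow, fibw_mul_conj, one_pow]

lemma KEYLEMMA (a b c d A B C D w e : ℂ)
    (h1 : e  *  A = d) (h2 : e  *  B = -c) (h3 : e  *  C = -b) (h4 : e  *  D = a)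
    (h6 : e  *  (A  *  D - B  *  C) = 1)
    (hw : w ^  4 - w ^  3 + w ^  2 - w + 1 = 0) :
    (a^ 3 * A^ 2 * w^ 20 + a^ 2 * b * A * B * w^ 23 + a^ 2 * b * A * B * w^ 19 + a^ 2 * c * A * C * w^ 21 + a^ 2 * c * A * C * w^ 17 + a^ 2 * d * B * C * w^ 20 + a * b^ 2 * B^ 2 * w^ 22 + a * b * c * A * D * w^ 24 + a * b * c * A * D * w^ 16 + a * b * c * B * C * w^ 20 + a * b * d * B * D * w^ 23 + a * c^ 2 * C^ 2 * w^ 18 + a * c * d * C * D * w^ 17 + b^ 2 * c * B * D * w^ 19 + b * c^ 2 * C * D * w^ 21 + b * c * d * D^ 2 * w^ 20) = a ^  3  *  A ^  2 := by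
  have he : e ≠ 0 := left_ne_zero_of_mul_eq_one h6
  refine mul_left_cancel₀ (pow_ne_zero 2 he) ?_
  linear_combination (a^ 3 * d * w^ 20 - a^ 3 * d + a^ 3 * A * w^ 20 * e - a^ 3 * A * e + a^ 2 * b * c * w^ 24 - a^ 2 * b * c * w^ 23 - a^ 2 * b * c * w^ 21 + a^ 2 * b * B * w^ 19 * e + a^ 2 * c * C * w^ 17 * e + a * b * c * D * w^ 16 * e)  *  h1 + (a^ 2 * b * d * w^ 23 - a^ 2 * b * d * w^ 20 + a^ 2 * b * d * w^ 19 + a^ 2 * b * A * w^ 23 * e - a * b^ 2 * c * w^ 22 + a * b^ 2 * B * w^ 22 * e + a * b * c * C * w^ 20 * e + b^ 2 * c * D * w^ 19 * e)  *  h2 + (a^ 2 * c * d * w^ 17 + a^ 2 * c * A * w^ 21 * e + a^ 2 * d * B * w^ 20 * e + a * b * c^ 2 * w^ 21 - a * b * c^ 2 * w^ 20 - a * b * c^ 2 * w^ 18 + a * c^ 2 * C * w^ 18 * e + a * c * d * D * w^ 17 * e)  *  h3 + (a * b * c * d * w^ 20 - a * b * c * d * w^ 17 + a * b * c * d * w^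 16 + a * b * c * A * w^ 24 * e + a * b * d * B * w^ 23 * e - b^ 2 * c^ 2 * w^ 19 + b * c^ 2 * C * w^ 21 * e + b * c * d * D * w^ 20 * e)  *  h4 + (a^ 3 * d^ 2 * w^ 16 + a^ 3 * d^ 2 * w^ 15 - a^ 3 * d^ 2 * w^ 11 - a^ 3 * d^ 2 * w^ 10 + a^ 3 * d^ 2 * w^ 6 + a^ 3 * d^ 2 * w^ 5 - a^ 3 * d^ 2 * w - a^ 3 * d^ 2 + a^ 2 * b * c * d * w^ 20 - a^ 2 * b * c * d * w^ 19 - 2 * a^ 2 * b * c * d * w^ 18 - a^ 2 * b * c * d * w^ 17 + a^ 2 * b * c * d * w^ 16 + a * b^ 2 * c^ 2 * w^ 18)  *  hw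

lemma baseAbs (w t : ℂ) (lwtau : w + w ^  9 = t) (lw10' : w ^  10 = 1)
    (hw : w ^  4 - w ^  3 + w ^  2 - w + 1 = 0) :
    (w ^  6 + t  *  w ^  3)  *  (w ^  54 + t  *  w ^  27) = t ^  2 := by
  linear_combination (- w^ 57 - w^ 39 - w^ 33 - w^ 31 - w^ 30 * t + w^ 9 + w + t)  *  lwtau + (w^ 56 + w^ 50 + w^ 48 + w^ 46 + w^ 40 + 2 * w^ 38 + w^ 36 + w^ 32 + 3 * w^ 30 + 2 * w^ 28 + w^ 26 + w^ 24 + 2 * w^ 22 + 3 * w^ 20 + 2 * w^ 18 + w^ 16 + w^ 14 + 2 * w^ 12 + 3 * w^ 10 + w^ 8 + w^ 6 + w^ 4 + 2 * w^ 2 + 1)  *  lw10' + (w^ 4 + w^ 3 + w^ 2 + w + 1)  *  hw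

lemma uF : fibF * fibFᴴ = 1 := by
  have h5 : Real.sqrt 5 ^ 2 = 5 := Real.sq_sqrt (by norm_num)
  have htpos : (0:ℝ) < (1 + Real.sqrt 5) / 2 := by positivity
  have hsq : Real.sqrt ((1 + Real.sqrt 5) / 2) * Real.sqrt ((1 + Real.sqrt 5) / 2)
      = (1 + Real.sqrt 5) / 2 := Real.mul_self_sqrt (le_of_lt htpos)
  have hd : (1 / ((1 + Real.sqrt 5) / 2)) * (1 / ((1 + Real.sqrt 5) / 2))
      + (1 / Real.sqrt ((1 + Real.sqrt 5) / 2)) * (1 / Real.sqrt ((1 + Real.sqrt 5) / 2))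
      = (1:ℝ) := by
    have e1 : (1 / Real.sqrt ((1 + Real.sqrt 5) / 2)) * (1 / Real.sqrt ((1 + Real.sqrt 5) / 2))
        = 1 / ((1 + Real.sqrt 5) / 2) := by
      rw [div_mul_div_comm, one_mul, hsq]
    rw [e1]
    have h15 : (1 + Real.sqrt 5) ≠ 0 := by positivity
    field_simp
    ring_nf
    nlinarith [h5]
  ext i j
  fin_cases i <;> fin_cases j <;>
    simp only [Fin.mk_zero, Fin.mk_one, Matrix.of_apply, fibF, Matrix.mul_apply, Fin.sum_univ_two,
      Matrix.conjTranspose_apply, Matrix.cons_val', Matrix.cons_val_zero, Matrix.cons_val_one,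
      Matrix.head_cons, Matrix.head_fin_const, Matrix.empty_val', Matrix.cons_val_fin_one,
      RCLike.star_def, Complex.conj_ofReal, map_neg, Matrix.one_apply_eq, Fin.isValue, ne_eq,
      zero_ne_one, not_false_eq_true, Matrix.one_apply_ne, one_ne_zero, Matrix.one_apply_ne',
      mul_neg, neg_mul, neg_neg] <;>
    (first
      | ring1
      | (norm_cast <;> linarith [hd]))

theorem stmt_6 (M : ℕ → Matrix (Fin 2) (Fin 2) ℂ)
    (h0 : M 0 = fibF * fibR * fibF)
    (hrec : ∀ j : ℕ, M (j + 1) =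
      M j * fibR⁻¹ * (M j)ᴴ * fibR^3 * M j * (fibR⁻¹)^3 * (M j)ᴴ * fibR * M j) :
    ∀ j : ℕ, ‖(M j) 0 0‖ = (1 / ((1 + Real.sqrt 5) / 2))^(5^j) := by
  have uR : fibR * fibRᴴ = 1 := by rw [fibR_eq]; exact diagU (wkU 6) (wkU 3)
  have uRinv : fibR⁻¹ * (fibR⁻¹)ᴴ = 1 := by rw [fibR_inv_eq]; exact diagU (wkU 4) (wkU 7)
  have uR3 : fibR ^ 3 * (fibR ^ 3)ᴴ = 1 := by rw [fibR_pow3]; exact diagU (wkU 8) (wkU 9)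
  have uRinv3 : (fibR⁻¹) ^ 3 * ((fibR⁻¹) ^ 3)ᴴ = 1 := by
    rw [fibR_inv_pow3]; exact diagU (wkU 2) (by simpa using wkU 1)
  have hU : ∀ j, M j * (M j)ᴴ = 1 := by
    intro j
    induction j with
    | zero => rw [h0]; exact mulU (mulU uF uR) uF
    | succ j ihu =>
      have uMH : (M j)ᴴ * ((M j)ᴴ)ᴴ = 1 := by
        rw [Matrix.conjTranspose_conjTranspose]; exact mul_eq_one_comm.mp ihu
      rw [hrec j]
      exact mulU (mulU (mulU (mulU (mulU (mulU (mulU (mulU ihu uRinv) uMH) uR3) ihu)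
        uRinv3) uMH) uR) ihu
  have htpos : (0:ℝ) < (1 + Real.sqrt 5) / 2 := by positivity
  intro j
  induction j with
  | zero =>
    have hsq : Real.sqrt ((1 + Real.sqrt 5) / 2) * Real.sqrt ((1 + Real.sqrt 5) / 2)
        = (1 + Real.sqrt 5) / 2 := Real.mul_self_sqrt (le_of_lt htpos)
    have htne : (((1 + Real.sqrt 5) / 2 : ℝ) : ℂ) ≠ 0 := by
      exact_mod_cast ne_of_gt htpos
    have hz : M 0 0 0 = ((((1 + Real.sqrt 5) / 2 : ℝ) : ℂ))⁻¹ ^ 2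
        * (fibw ^ 6 + (((1 + Real.sqrt 5) / 2 : ℝ) : ℂ) * fibw ^ 3) := by
      rw [h0, fibR_eq]
      simp only [Matrix.of_apply, fibF, Matrix.mul_apply, Fin.sum_univ_two, Matrix.cons_val',
        Matrix.cons_val_zero, Matrix.cons_val_one, Matrix.head_cons, Matrix.head_fin_const,
        Matrix.empty_val', Matrix.cons_val_fin_one, mul_zero, zero_mul, add_zero, zero_add,
        mul_one, one_mul]
      have hsqC : ((Real.sqrt ((1 + Real.sqrt 5) / 2) : ℝ) : ℂ)
          * ((Real.sqrt ((1 + Real.sqrt 5) / 2) : ℝ) : ℂ) = (((1 + Real.sqrt 5) / 2 : ℝ) : ℂ) := by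
        exact_mod_cast congrArg (Complex.ofReal) hsq
      have hsqne : ((Real.sqrt ((1 + Real.sqrt 5) / 2) : ℝ) : ℂ) ≠ 0 := by
        have : (0:ℝ) < Real.sqrt ((1 + Real.sqrt 5) / 2) := Real.sqrt_pos.mpr htpos
        exact_mod_cast ne_of_gt this
      have hrinv : ((Real.sqrt ((1 + Real.sqrt 5) / 2) : ℝ) : ℂ)⁻¹
          * ((Real.sqrt ((1 + Real.sqrt 5) / 2) : ℝ) : ℂ)⁻¹
          = ((((1 + Real.sqrt 5) / 2 : ℝ)) : ℂ)⁻¹ := by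
        rw [← mul_inv, hsqC]
      have hinv1 : ((((1 + Real.sqrt 5) / 2 : ℝ)) : ℂ) * ((((1 + Real.sqrt 5) / 2 : ℝ)) : ℂ)⁻¹ = 1 :=
        mul_inv_cancel₀ htne
      rw [one_div, one_div, Complex.ofReal_inv, Complex.ofReal_inv]
      linear_combination fibw ^ 3 * hrinv
        - fibw ^ 3 * ((((1 + Real.sqrt 5) / 2 : ℝ)) : ℂ)⁻¹ * hinv1
    have hcu : (starRingEnd ℂ) (fibw ^ 6 + (((1 + Real.sqrt 5) / 2 : ℝ) : ℂ) * fibw ^ 3)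
        = fibw ^ 54 + (((1 + Real.sqrt 5) / 2 : ℝ) : ℂ) * fibw ^ 27 := by
      simp only [map_add, _root_.map_mul, map_pow, fibw_conj, Complex.conj_ofReal]
      ring
    have hmul : (fibw ^ 6 + (((1 + Real.sqrt 5) / 2 : ℝ) : ℂ) * fibw ^ 3)
        * (starRingEnd ℂ) (fibw ^ 6 + (((1 + Real.sqrt 5) / 2 : ℝ) : ℂ) * fibw ^ 3)
        = ((((1 + Real.sqrt 5) / 2 : ℝ) : ℂ)) ^ 2 := by
      rw [hcu]
      exact baseAbs fibw _ fibw_tau fibw_pow_ten fibw_cyc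
    have hnsq : Complex.normSq (fibw ^ 6 + (((1 + Real.sqrt 5) / 2 : ℝ) : ℂ) * fibw ^ 3)
        = ((1 + Real.sqrt 5) / 2) ^ 2 := by
      have := (Complex.mul_conj (fibw ^ 6 + (((1 + Real.sqrt 5) / 2 : ℝ) : ℂ) * fibw ^ 3)).symm.trans hmul
      exact_mod_cast this
    have habsu : ‖fibw ^ 6 + (((1 + Real.sqrt 5) / 2 : ℝ) : ℂ) * fibw ^ 3‖
        = (1 + Real.sqrt 5) / 2 := by
      rw [Complex.norm_def, hnsq, Real.sqrt_sq (le_of_lt htpos)]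
    rw [hz, norm_mul, norm_pow, norm_inv, Complex.norm_real, habsu, Real.norm_eq_abs,
      abs_of_pos htpos]
    rw [pow_zero, pow_one]
    field_simp
  | succ j ih =>
    have e1 := congrFun (congrFun (hU j) 0) 0
    have e2 := congrFun (congrFun (hU j) 0) 1
    have e3 := congrFun (congrFun (hU j) 1) 0
    have e4 := congrFun (congrFun (hU j) 1) 1
    simp only [Matrix.mul_apply, Fin.sum_univ_two, Matrix.conjTranspose_apply,
      Matrix.one_apply_eq, Matrix.one_apply, RCLike.star_def, Fin.isValue,
      ne_eq, zero_ne_one, not_false_eq_true, Matrix.one_apply_ne, one_ne_zero,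
      Matrix.one_apply_ne'] at e1 e2 e3 e4
    norm_num at e2 e3
    set a := M j 0 0 with haa
    set b := M j 0 1 with hbb
    set c := M j 1 0 with hcc
    set d := M j 1 1 with hdd
    have h1 : (a * d - b * c) * (starRingEnd ℂ) a = d := by linear_combination d * e1 - b * e3
    have h2 : (a * d - b * c) * (starRingEnd ℂ) b = -c := by linear_combination a * e3 - c * e1
    have h3 : (a * d - b * c) * (starRingEnd ℂ) c = -b := by linear_combination d * e2 - b * e4
    have h4 : (a * d - b * c) * (starRingEnd ℂ) d = a := by linear_combination a * e4 - c * e2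
    have h6 : (a * d - b * c) * ((starRingEnd ℂ) a * (starRingEnd ℂ) d
        - (starRingEnd ℂ) b * (starRingEnd ℂ) c) = 1 := by
      linear_combination (starRingEnd ℂ) d * h1 - (starRingEnd ℂ) c * h2 + e4
    have hkey := KEYLEMMA a b c d ((starRingEnd ℂ) a) ((starRingEnd ℂ) b) ((starRingEnd ℂ) c)
      ((starRingEnd ℂ) d) fibw (a * d - b * c) h1 h2 h3 h4 h6 fibw_cyc
    have hE : M (j + 1) 0 0 = a ^ 3 * ((starRingEnd ℂ) a) ^ 2 := by
      rw [hrec j, fibR_inv_pow3, fibR_pow3, fibR_inv_eq, fibR_eq]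
      simp only [Matrix.of_apply, Matrix.mul_apply, Fin.sum_univ_two, Matrix.conjTranspose_apply,
        RCLike.star_def, Matrix.cons_val', Matrix.cons_val_zero, Matrix.cons_val_one,
        Matrix.head_cons, Matrix.head_fin_const, Matrix.empty_val', Matrix.cons_val_fin_one,
        mul_zero, zero_mul, add_zero, zero_add, mul_one, one_mul, ← haa, ← hbb, ← hcc, ← hdd]
      linear_combination hkey
    rw [hE, norm_mul, norm_pow, norm_pow, Complex.norm_conj, ih]
    rw [show 5 ^ (j + 1) = 5 ^ j * 3 + 5 ^ j * 2 by ring, pow_add, pow_mul, pow_mul]
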